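/- If S is a Von Neumann regular semigroup with pseudo-inverse map s (so x·s(x)·x = x for all x), then the free k-vector space k[S] with linearly extended multiplication, the comultiplication δ(x) = x ⊗ x on basis elements, and the linear extension of s, is a VN-core in the category of k-vector spaces. -/

import Mathlib

open TensorProduct LinearMap

/-- The diagonal comultiplication on a semigroup algebra, `δ(x) = x ⊗ x` on
basis elements. -/
noncomputable def sgComul (k S : Type*) [CommRing k] [Semigroup S] :
    MonoidAlgebra k S →ₗ[k] MonoidAlgebra k S ⊗[k] MonoidAlgebra k S :=
  Finsupp.lift (MonoidAlgebra k S ⊗[k] MonoidAlgebra k S) k S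
    (fun x => MonoidAlgebra.single x (1 : k) ⊗ₜ[k] MonoidAlgebra.single x (1 : k)) ∘ₗ
    (MonoidAlgebra.coeffLinearEquiv k).toLinearMap

/-- The linear extension of a map `s : S → S` to the semigroup algebra. -/
noncomputable def sgExtend (k : Type*) {S : Type*} [CommRing k] (s : S → S) :
    MonoidAlgebra k S →ₗ[k] MonoidAlgebra k S :=
  MonoidAlgebra.mapDomainLinearMap k k s

lemma sgComul_single (k : Type*) {S : Type*} [CommRing k] [Semigroup S] (x : S) :
    sgComul k S (MonoidAlgebra.single x 1) =
      MonoidAlgebra.single x (1:k) ⊗ₜ[k] MonoidAlgebra.single x (1:k) := by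
  rw [sgComul]
  erw [Finsupp.lift_apply, Finsupp.sum_single_index] <;> simp

lemma sgExtend_single (k : Type*) {S : Type*} [CommRing k] (s : S → S) (x : S) :
    sgExtend k s (MonoidAlgebra.single x 1) = MonoidAlgebra.single (s x) (1:k) := by
  rw [sgExtend]
  erw [MonoidAlgebra.mapDomainLinearMap_single]

lemma mul'_single (k : Type*) {S : Type*} [CommRing k] [Semigroup S] (x y : S) :
    LinearMap.mul' k (MonoidAlgebra k S)
        (MonoidAlgebra.single x (1:k) ⊗ₜ[k] MonoidAlgebra.single y (1:k)) =
      MonoidAlgebra.single (x * y) (1:k) := by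
  rw [LinearMap.mul'_apply, MonoidAlgebra.single_mul_single, one_mul]

/-- if `S` is a Von Neumann regular semigroup with pseudo-inverse
map `s`, then the semigroup algebra `k[S]`, with the linearly extended
multiplication, the comultiplication `δ(x) = x ⊗ x`, and the linear extension of
`s`, is a VN-core: `μ` is associative, `δ` is coassociative, the semibialgebra
axiom holds, and `μ₃(1 ⊗ T ⊗ 1)δ₃ = 1`. -/
theorem semigroupAlgebra_vncore (k : Type*) {S : Type*} [CommRing k] [Semigroup S]
    (s : S → S) (hs : ∀ x : S, x * s x * x = x) :
    (LinearMap.mul' k (MonoidAlgebra k S)) ∘ₗ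
        (LinearMap.mul' k (MonoidAlgebra k S)).rTensor (MonoidAlgebra k S) =
      (LinearMap.mul' k (MonoidAlgebra k S)) ∘ₗ
        (LinearMap.mul' k (MonoidAlgebra k S)).lTensor (MonoidAlgebra k S) ∘ₗ
        (TensorProduct.assoc k (MonoidAlgebra k S) (MonoidAlgebra k S)
          (MonoidAlgebra k S)).toLinearMap ∧
    (TensorProduct.assoc k (MonoidAlgebra k S) (MonoidAlgebra k S)
          (MonoidAlgebra k S)).toLinearMap ∘ₗ
        (sgComul k S).rTensor (MonoidAlgebra k S) ∘ₗ sgComul k S =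
      (sgComul k S).lTensor (MonoidAlgebra k S) ∘ₗ sgComul k S ∧
    sgComul k S ∘ₗ LinearMap.mul' k (MonoidAlgebra k S) =
      TensorProduct.map (LinearMap.mul' k (MonoidAlgebra k S))
          (LinearMap.mul' k (MonoidAlgebra k S)) ∘ₗ
        (TensorProduct.tensorTensorTensorComm k (MonoidAlgebra k S)
          (MonoidAlgebra k S) (MonoidAlgebra k S) (MonoidAlgebra k S)).toLinearMap ∘ₗ
        TensorProduct.map (sgComul k S) (sgComul k S) ∧
    (LinearMap.mul' k (MonoidAlgebra k S)) ∘ₗ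
        (LinearMap.mul' k (MonoidAlgebra k S)).lTensor (MonoidAlgebra k S) ∘ₗ
        ((sgExtend k s).rTensor (MonoidAlgebra k S)).lTensor (MonoidAlgebra k S) ∘ₗ
        (sgComul k S).lTensor (MonoidAlgebra k S) ∘ₗ sgComul k S =
      LinearMap.id := by
  refine ⟨?_, ?_, ?_, ?_⟩
  · ext x y z
    simp [mul_assoc]
  · ext x
    simp [sgComul_single]
  · ext x y
    simp [sgComul_single, mul'_single]
  · ext x
    simp [sgComul_single, sgExtend_single, mul'_single, ← mul_assoc, hs]
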